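/- Let α, β ∈ (0,1), v ∈ C^α and w ∈ C^β. Then the symmetric part S(v,w) := Σ_{m,n≤1} v_{0m} w_{0n} ∫_0^· φ_{0m} dφ_{0n} + (1/2) Σ_{p≥1} Δ_p v Δ_p w defines a bounded bilinear operator from C^α × C^β to C^{α+β}, i.e. ‖S(v,w)‖_{α+β} ≲ ‖v‖_α ‖w‖_β, without any restriction on α + β. -/

import Mathlib

noncomputable section
open MeasureTheory Set

namespace Sch

/-- dyadic point `t⁰_{pm} = (m-1)/2^p`. -/
def pt0 (p m : ℕ) : ℝ := ((m : ℝ) - 1) / 2 ^ p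
/-- dyadic point `t¹_{pm} = (2m-1)/2^{p+1}`. -/
def pt1 (p m : ℕ) : ℝ := (2 * (m : ℝ) - 1) / 2 ^ (p + 1)
/-- dyadic point `t²_{pm} = m/2^p`. -/
def pt2 (p m : ℕ) : ℝ := (m : ℝ) / 2 ^ p

/-- The rescaled Haar function `χ_{pm} = 2^{p/2} H_{pm}`, with the conventions
`χ_{00} = 1` on `[0,1)` (derivative of `φ_{00}(t) = t`) and `χ_{p0} ≡ 0` for `p ≥ 1`. -/
def chi (p m : ℕ) (t : ℝ) : ℝ :=
  if m = 0 then (if p = 0 ∧ 0 ≤ t ∧ t < 1 then 1 else 0)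
  else if pt0 p m ≤ t ∧ t < pt1 p m then (2 : ℝ) ^ p
  else if pt1 p m ≤ t ∧ t < pt2 p m then -(2 : ℝ) ^ p
  else 0

/-- The rescaled Schauder tent function `φ_{pm} = 2^{p/2} G_{pm} = ∫_0^· χ_{pm}`. -/
def phi (p m : ℕ) (t : ℝ) : ℝ := ∫ s in (0:ℝ)..t, chi p m s

variable {E F G : Type*} [NormedAddCommGroup E] [NormedSpace ℝ E]
  [NormedAddCommGroup F] [NormedSpace ℝ F] [NormedAddCommGroup G] [NormedSpace ℝ G]

/-- The (rescaled) Schauder coefficient `f_{pm} = 2f(t¹_{pm}) - f(t⁰_{pm}) - f(t²_{pm})`,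
with the conventions `f_{00} = f(1) - f(0)` and `f_{p0} = 0` for `p ≥ 1`. -/
def coeff (f : ℝ → E) (p m : ℕ) : E :=
  if m = 0 then (if p = 0 then f 1 - f 0 else 0)
  else f (pt1 p m) + f (pt1 p m) - f (pt0 p m) - f (pt2 p m)

/-- Shifted Schauder blocks: `block f 0 = Δ_{-1} f ≡ f(0)` and `block f (p+1) = Δ_p f`. -/
def block (f : ℝ → E) : ℕ → ℝ → E
  | 0 => fun _ => f 0
  | (p + 1) => fun t => ∑ m ∈ Finset.range (2 ^ p + 1), phi p m t • coeff f p m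

/-- Partial sum `psum f p = S_{p-1} f` (blocks of generations `-1, 0, …, p-1`),
the piecewise linear interpolation of `f` on the dyadic grid of generation `p`. -/
def psum (f : ℝ → E) (p : ℕ) (t : ℝ) : E := ∑ k ∈ Finset.range (p + 1), block f k t

/-- Derivative of the shifted Schauder block. -/
def dblock (f : ℝ → E) : ℕ → ℝ → E
  | 0 => fun _ => 0
  | (p + 1) => fun t => ∑ m ∈ Finset.range (2 ^ p + 1), chi p m t • coeff f p m

/-- Derivative of `psum f p = S_{p-1} f`. -/
def dpsum (f : ℝ → E) (p : ℕ) (t : ℝ) : E := ∑ k ∈ Finset.range (p + 1), dblock f k t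

/-- `CoeffBound γ f K` expresses `‖f‖_γ = sup_{p,m} 2^{pγ} |f_{pm}| ≤ K`
(including the generation-(-1) coefficient `f_{-1,0} = f(0)`). -/
def CoeffBound (γ : ℝ) (f : ℝ → E) (K : ℝ) : Prop :=
  (2 : ℝ) ^ (-γ) * ‖f 0‖ ≤ K ∧
  ∀ p m : ℕ, m ≤ 2 ^ p → (2 : ℝ) ^ (γ * (p : ℝ)) * ‖coeff f p m‖ ≤ K

/-- The Schauder paraproduct `π_<(v,w) = ∑_{p≥0} S_{p-1}v · Δ_p w`. -/
def para (v : ℝ → (E →L[ℝ] F)) (w : ℝ → E) (t : ℝ) : F :=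
  ∑' p : ℕ, (psum v p t) (block w (p + 1) t)

/-- The `p`-th term of the Lévy area: `∫_0^t Δ_p v dS_{p-1}w - ∫_0^t d(S_{p-1}v) Δ_p w`. -/
def leviTerm (v : ℝ → (E →L[ℝ] F)) (w : ℝ → E) (p : ℕ) (t : ℝ) : F :=
  ∫ s in (0:ℝ)..t, ((block v (p + 1) s) (dpsum w p s) - (dpsum v p s) (block w (p + 1) s))

/-- The Lévy area `L(v,w) = ∑_p (∫ Δ_p v dS_{p-1}w - ∫ d(S_{p-1}v) Δ_p w)`. -/
def levi (v : ℝ → (E →L[ℝ] F)) (w : ℝ → E) (t : ℝ) : F := ∑' p : ℕ, leviTerm v w p t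

/-- The symmetric part
`S(v,w) = ∑_{m,n≤1} v_{0m}w_{0n} ∫_0^· φ_{0m} dφ_{0n} + (1/2) ∑_{p≥1} Δ_p v Δ_p w`. -/
def symPart (v : ℝ → (E →L[ℝ] F)) (w : ℝ → E) (t : ℝ) : F :=
  (∑ m ∈ Finset.range 2, ∑ n ∈ Finset.range 2,
      (∫ s in (0:ℝ)..t, phi 0 m s * chi 0 n s) • ((coeff v 0 m) (coeff w 0 n)))
    + (1 / 2 : ℝ) • ∑' p : ℕ, (block v (p + 2) t) (block w (p + 2) t)

/-- The Young integral `I(v, dw) = L(v,w) + S(v,w) + π_<(v,w)`. -/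
def young (v : ℝ → (E →L[ℝ] F)) (w : ℝ → E) (t : ℝ) : F :=
  levi v w t + symPart v w t + para v w t

end Sch
namespace SchAux
open Sch MeasureTheory Set intervalIntegral

lemma two_pow_pos (p : ℕ) : (0:ℝ) < 2 ^ p := by positivity

lemma pt1_sub_pt0 (p m : ℕ) : pt1 p m - pt0 p m = 1 / 2 ^ (p+1) := by
  unfold pt1 pt0; rw [pow_succ]; field_simp; ring

lemma pt2_sub_pt1 (p m : ℕ) : pt2 p m - pt1 p m = 1 / 2 ^ (p+1) := by
  unfold pt2 pt1; rw [pow_succ]; field_simp; ring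

lemma pt0_le_pt1 (p m : ℕ) : pt0 p m ≤ pt1 p m := by
  have h := pt1_sub_pt0 p m
  have h2 : (0:ℝ) < 1 / 2 ^ (p+1) := by positivity
  linarith

lemma pt1_le_pt2 (p m : ℕ) : pt1 p m ≤ pt2 p m := by
  have h := pt2_sub_pt1 p m
  have h2 : (0:ℝ) < 1 / 2 ^ (p+1) := by positivity
  linarith

lemma pt0_le_pt2 (p m : ℕ) : pt0 p m ≤ pt2 p m := le_trans (pt0_le_pt1 p m) (pt1_le_pt2 p m)

lemma abs_chi_le (p m : ℕ) (t : ℝ) : |chi p m t| ≤ 2 ^ p := by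
  unfold chi
  have h1 : (0:ℝ) ≤ 2 ^ p := (two_pow_pos p).le
  have h2 : (1:ℝ) ≤ 2 ^ p := one_le_pow₀ (by norm_num)
  split_ifs <;> simp [abs_of_nonneg, h1, h2, abs_le] <;> try linarith

lemma chi_eq_indicator (p m : ℕ) (hm : m ≠ 0) : chi p m = fun t =>
    Set.indicator (Ico (pt0 p m) (pt1 p m)) (fun _ => (2:ℝ)^p) t
    + Set.indicator (Ico (pt1 p m) (pt2 p m)) (fun _ => -(2:ℝ)^p) t := by
  funext t
  simp only [chi, hm, if_false, Set.indicator_apply, mem_Ico]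
  split_ifs with h1 h2 <;> try ring
  exact absurd (h1.2.trans_le h2.1) (lt_irrefl t)

lemma measurable_chi (p m : ℕ) : Measurable (chi p m) := by
  rcases Nat.eq_zero_or_pos m with hm | hm
  · subst hm
    by_cases hp : p = 0
    · subst hp
      have h : chi 0 0 = Set.indicator (Ico (0:ℝ) 1) (fun _ => (1:ℝ)) := by
        funext t; simp [chi, Set.indicator_apply, mem_Ico]
      rw [h]; exact measurable_const.indicator measurableSet_Ico
    · have h : chi p 0 = fun _ => (0:ℝ) := by funext t; simp [chi, hp]
      rw [h]; exact measurable_const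
  · have hm' : m ≠ 0 := Nat.pos_iff_ne_zero.mp hm
    rw [chi_eq_indicator p m hm']
    exact (measurable_const.indicator measurableSet_Ico).add
      (measurable_const.indicator measurableSet_Ico)

lemma intervalIntegrable_chi (p m : ℕ) (a b : ℝ) :
    IntervalIntegrable (chi p m) volume a b := by
  rw [intervalIntegrable_iff]
  apply Measure.integrableOn_of_bounded (M := 2 ^ p) measure_Ioc_lt_top.ne
    (measurable_chi p m).aestronglyMeasurable
  exact ae_of_all _ fun t => by rw [Real.norm_eq_abs]; exact abs_chi_le p m t

lemma phi_sub (p m : ℕ) (a b : ℝ) :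
    phi p m b - phi p m a = ∫ s in a..b, chi p m s := by
  unfold phi
  rw [← integral_interval_sub_left (intervalIntegrable_chi p m 0 b)
    (intervalIntegrable_chi p m 0 a)]

lemma abs_phi_sub_le (p m : ℕ) (a b : ℝ) :
    |phi p m b - phi p m a| ≤ 2 ^ p * |b - a| := by
  rw [phi_sub]
  have h := intervalIntegral.norm_integral_le_of_norm_le_const (a := a) (b := b)
    (C := 2 ^ p) (f := chi p m)
    (fun x _ => by rw [Real.norm_eq_abs]; exact abs_chi_le p m x)
  rwa [Real.norm_eq_abs] at h

lemma continuous_phi (p m : ℕ) : Continuous (phi p m) :=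
  intervalIntegral.continuous_primitive (intervalIntegrable_chi p m) 0

/-- integral of a function constant on `Ico a b`. -/
lemma integral_constOn {f : ℝ → ℝ} {a b c : ℝ} (hab : a ≤ b)
    (h : ∀ s ∈ Ico a b, f s = c) : ∫ s in a..b, f s = c * (b - a) := by
  have hb : ∀ᵐ x : ℝ, x ≠ b := by
    refine ae_iff.mpr ?_
    simp [Real.volume_singleton]
  have : ∫ s in a..b, f s = ∫ s in a..b, c := by
    apply intervalIntegral.integral_congr_ae
    filter_upwards [hb] with x hx hxI
    rw [uIoc_of_le hab] at hxI
    exact h x ⟨hxI.1.le, lt_of_le_of_ne hxI.2 hx⟩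
  rw [this, intervalIntegral.integral_const, smul_eq_mul, mul_comm]


lemma pt0_nonneg (p m : ℕ) (hm : m ≠ 0) : 0 ≤ pt0 p m := by
  have h : (1:ℝ) ≤ (m:ℝ) := by exact_mod_cast Nat.one_le_iff_ne_zero.mpr hm
  unfold pt0
  apply div_nonneg (by linarith) (two_pow_pos p).le

lemma chi_zero_of_lt (p m : ℕ) (hm : m ≠ 0) {t : ℝ} (ht : t < pt0 p m) : chi p m t = 0 := by
  have h1 := pt0_le_pt1 p m
  simp only [chi, hm, if_false]
  rw [if_neg (by push_neg; intro h; linarith), if_neg (by push_neg; intro h; linarith)]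

lemma chi_zero_of_ge (p m : ℕ) (hm : m ≠ 0) {t : ℝ} (ht : pt2 p m ≤ t) : chi p m t = 0 := by
  have h1 := pt1_le_pt2 p m
  simp only [chi, hm, if_false]
  rw [if_neg (by push_neg; intro h; linarith), if_neg (by push_neg; intro h; linarith)]

lemma phi_zero (p m : ℕ) : phi p m 0 = 0 := intervalIntegral.integral_same

lemma phi_zero_left (p m : ℕ) (hm : m ≠ 0) {t : ℝ} (ht : t ≤ pt0 p m) : phi p m t = 0 := by
  have h0 := pt0_nonneg p m hm
  unfold phi
  rcases le_total 0 t with h | h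
  · rw [integral_constOn h (fun s hs => chi_zero_of_lt p m hm (lt_of_lt_of_le hs.2 ht))]; ring
  · rw [intervalIntegral.integral_symm t 0,
      integral_constOn h (fun s hs => chi_zero_of_lt p m hm (lt_of_lt_of_le hs.2 h0))]; ring

lemma two_pow_mul_inv_succ (p : ℕ) : (2:ℝ)^p * (1 / 2^(p+1)) = 1/2 := by
  rw [pow_succ]
  have h2 : (0:ℝ) < 2 ^ p := two_pow_pos p
  field_simp

lemma phi_pt1 (p m : ℕ) (hm : m ≠ 0) : phi p m (pt1 p m) = 1 / 2 := by
  have h1 : phi p m (pt1 p m) - phi p m (pt0 p m) = (2:ℝ)^p * (pt1 p m - pt0 p m) := by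
    rw [phi_sub]
    exact integral_constOn (pt0_le_pt1 p m)
      (fun s hs => by simp only [chi, hm, if_false]; rw [if_pos ⟨hs.1, hs.2⟩])
  rw [phi_zero_left p m hm (le_refl _), sub_zero, pt1_sub_pt0, two_pow_mul_inv_succ] at h1
  exact h1

lemma phi_pt2 (p m : ℕ) (hm : m ≠ 0) : phi p m (pt2 p m) = 0 := by
  have h1 : phi p m (pt2 p m) - phi p m (pt1 p m) = -(2:ℝ)^p * (pt2 p m - pt1 p m) := by
    rw [phi_sub]
    refine integral_constOn (pt1_le_pt2 p m) (fun s hs => ?_)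
    simp only [chi, hm, if_false]
    rw [if_neg (by push_neg; intro h; exact hs.1), if_pos ⟨hs.1, hs.2⟩]
  rw [phi_pt1 p m hm, pt2_sub_pt1, neg_mul, two_pow_mul_inv_succ] at h1
  linarith

lemma phi_zero_right (p m : ℕ) (hm : m ≠ 0) {t : ℝ} (ht : pt2 p m ≤ t) : phi p m t = 0 := by
  have h1 : phi p m t - phi p m (pt2 p m) = 0 * (t - pt2 p m) := by
    rw [phi_sub]
    exact integral_constOn ht (fun s hs => chi_zero_of_ge p m hm hs.1)
  rw [phi_pt2 p m hm] at h1
  linarith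

lemma abs_phi_le_half (p m : ℕ) (hm : m ≠ 0) (t : ℝ) : |phi p m t| ≤ 1 / 2 := by
  rcases le_total t (pt0 p m) with h | h
  · rw [phi_zero_left p m hm h]; norm_num
  rcases le_total (pt2 p m) t with h' | h'
  · rw [phi_zero_right p m hm h']; norm_num
  rcases le_total t (pt1 p m) with h'' | h''
  · have := abs_phi_sub_le p m (pt0 p m) t
    rw [phi_zero_left p m hm (le_refl _), sub_zero] at this
    have hb : |t - pt0 p m| ≤ 1 / 2^(p+1) := by
      rw [abs_of_nonneg (by linarith)]
      have := pt1_sub_pt0 p m; linarith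
    calc |phi p m t| ≤ 2^p * |t - pt0 p m| := this
      _ ≤ 2^p * (1/2^(p+1)) := by
          exact mul_le_mul_of_nonneg_left hb (two_pow_pos p).le
      _ = 1/2 := two_pow_mul_inv_succ p
  · have h3 := abs_phi_sub_le p m (pt2 p m) t
    rw [phi_zero_right p m hm (le_refl _), sub_zero] at h3
    have hb : |t - pt2 p m| ≤ 1 / 2^(p+1) := by
      rw [abs_of_nonpos (by linarith), neg_sub]
      have := pt2_sub_pt1 p m; linarith
    calc |phi p m t| ≤ 2^p * |t - pt2 p m| := h3
      _ ≤ 2^p * (1/2^(p+1)) := mul_le_mul_of_nonneg_left hb (two_pow_pos p).le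
      _ = 1/2 := two_pow_mul_inv_succ p

lemma abs_phi_le_one (p m : ℕ) (t : ℝ) : |phi p m t| ≤ 1 := by
  rcases Nat.eq_zero_or_pos m with hm | hm
  · subst hm
    by_cases hp : p = 0
    · subst hp
      have hz : ∀ s : ℝ, s < 0 → chi 0 0 s = 0 := by
        intro s hs
        have hns : ¬((0:ℝ) ≤ s ∧ s < 1) := fun hc => absurd hc.1 (not_le.mpr hs)
        simp [chi, hns]
      rcases le_total t 0 with h | h
      · have : phi 0 0 t = 0 := by
          unfold phi
          rw [intervalIntegral.integral_symm t 0,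
            integral_constOn h (fun s hs => hz s hs.2)]; ring
        rw [this]; norm_num
      rcases le_total t 1 with h1 | h1
      · have h3 := abs_phi_sub_le 0 0 0 t
        rw [phi_zero, sub_zero] at h3
        calc |phi 0 0 t| ≤ 2^0 * |t - 0| := h3
          _ ≤ 1 := by rw [abs_of_nonneg (by linarith)]; simpa using h1
      · have hz1 : ∀ s : ℝ, (1:ℝ) ≤ s → chi 0 0 s = 0 := by
          intro s hs
          have hns : ¬((0:ℝ) ≤ s ∧ s < 1) := fun hc => absurd hc.2 (not_lt.mpr hs)
          simp [chi, hns]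
        have h4 : phi 0 0 t - phi 0 0 1 = 0 * (t - 1) := by
          rw [phi_sub]
          exact integral_constOn h1 (fun s hs => hz1 s hs.1)
        have h5 := abs_phi_sub_le 0 0 0 1
        rw [phi_zero, sub_zero] at h5
        have : phi 0 0 t = phi 0 0 1 := by linarith
        rw [this]
        calc |phi 0 0 1| ≤ 2^0 * |(1:ℝ) - 0| := h5
          _ ≤ 1 := by norm_num
    · have : chi p 0 = fun _ => (0:ℝ) := by funext s; simp [chi, hp]
      have hphi : phi p 0 t = 0 := by unfold phi; rw [this]; simp
      rw [hphi]; norm_num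
  · have := abs_phi_le_half p m (Nat.pos_iff_ne_zero.mp hm) t
    linarith


/-! ### Dyadic constancy of `chi` -/

lemma cast_div_pow (P q : ℕ) (h : q ≤ P) (x : ℝ) :
    x / 2^q = x * (2:ℝ)^(P-q) / 2^P := by
  have hP : (2:ℝ)^P = 2^q * 2^(P-q) := by rw [← pow_add]; congr 1; omega
  rw [hP]
  have h1 : (2:ℝ)^q ≠ 0 := (two_pow_pos q).ne'
  have h2 : (2:ℝ)^(P-q) ≠ 0 := (two_pow_pos (P-q)).ne'
  field_simp

lemma dyadic_le_iff {P k : ℕ} {t : ℝ} (ht : (k:ℝ)/2^P ≤ t) (ht2 : t < ((k:ℝ)+1)/2^P)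
    (j : ℤ) : ((j:ℝ)/2^P ≤ t ↔ j ≤ (k:ℤ)) := by
  have hpos := two_pow_pos P
  constructor
  · intro h
    by_contra hc
    push_neg at hc
    have hj : ((k:ℝ)+1) ≤ (j:ℝ) := by exact_mod_cast hc
    have h2 : ((k:ℝ)+1)/2^P ≤ (j:ℝ)/2^P := by gcongr
    linarith
  · intro h
    have hj : (j:ℝ) ≤ (k:ℝ) := by exact_mod_cast h
    have h2 : (j:ℝ)/2^P ≤ (k:ℝ)/2^P := by gcongr
    linarith

lemma dyadic_lt_iff {P k : ℕ} {t : ℝ} (ht : (k:ℝ)/2^P ≤ t) (ht2 : t < ((k:ℝ)+1)/2^P)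
    (j : ℤ) : (t < (j:ℝ)/2^P ↔ (k:ℤ) + 1 ≤ j) := by
  have hpos := two_pow_pos P
  constructor
  · intro h
    by_contra hc
    push_neg at hc
    have hj : (j:ℝ) ≤ (k:ℝ) := by exact_mod_cast (by omega : j ≤ (k:ℤ))
    have h2 : (j:ℝ)/2^P ≤ (k:ℝ)/2^P := by gcongr
    linarith
  · intro h
    have hj : ((k:ℝ)+1) ≤ (j:ℝ) := by exact_mod_cast h
    have h2 : ((k:ℝ)+1)/2^P ≤ (j:ℝ)/2^P := by gcongr
    linarith

lemma pt0_cast (q P m : ℕ) (h : q ≤ P) :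
    pt0 q m = (((m:ℤ) - 1) * 2^(P-q) : ℤ) / (2:ℝ)^P := by
  unfold pt0; rw [cast_div_pow P q h]; push_cast; ring

lemma pt2_cast (q P m : ℕ) (h : q ≤ P) :
    pt2 q m = ((m:ℤ) * 2^(P-q) : ℤ) / (2:ℝ)^P := by
  unfold pt2; rw [cast_div_pow P q h]; push_cast; ring

lemma pt1_cast (q P m : ℕ) (h : q + 1 ≤ P) :
    pt1 q m = ((2 * (m:ℤ) - 1) * 2^(P-(q+1)) : ℤ) / (2:ℝ)^P := by
  unfold pt1; rw [cast_div_pow P (q+1) h]; push_cast; ring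

lemma one_cast_pow (P : ℕ) : (1:ℝ) = ((2^P : ℤ) : ℝ) / (2:ℝ)^P := by
  have := two_pow_pos P
  push_cast
  field_simp

lemma zero_cast_pow (P : ℕ) : (0:ℝ) = (((0:ℤ)) : ℝ) / (2:ℝ)^P := by simp

lemma chi_constOn {q m P k : ℕ} (hqP : q + 1 ≤ P) {s t : ℝ}
    (hs1 : (k:ℝ)/2^P ≤ s) (hs2 : s < ((k:ℝ)+1)/2^P)
    (ht1 : (k:ℝ)/2^P ≤ t) (ht2 : t < ((k:ℝ)+1)/2^P) :
    chi q m s = chi q m t := by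
  have hqP' : q ≤ P := by omega
  have key_le : ∀ j : ℤ, ((j:ℝ)/2^P ≤ s ↔ (j:ℝ)/2^P ≤ t) := fun j => by
    rw [dyadic_le_iff hs1 hs2 j, dyadic_le_iff ht1 ht2 j]
  have key_lt : ∀ j : ℤ, (s < (j:ℝ)/2^P ↔ t < (j:ℝ)/2^P) := fun j => by
    rw [dyadic_lt_iff hs1 hs2 j, dyadic_lt_iff ht1 ht2 j]
  have h0 : (0 ≤ s ↔ 0 ≤ t) := by
    rw [zero_cast_pow P]; exact key_le 0
  have h1 : (s < 1 ↔ t < 1) := by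
    rw [one_cast_pow P]; exact key_lt _
  have hpt0 : (pt0 q m ≤ s ↔ pt0 q m ≤ t) := by
    rw [pt0_cast q P m hqP']; exact key_le _
  have hpt1le : (pt1 q m ≤ s ↔ pt1 q m ≤ t) := by
    rw [pt1_cast q P m hqP]; exact key_le _
  have hpt1lt : (s < pt1 q m ↔ t < pt1 q m) := by
    rw [pt1_cast q P m hqP]; exact key_lt _
  have hpt2 : (s < pt2 q m ↔ t < pt2 q m) := by
    rw [pt2_cast q P m hqP']; exact key_lt _
  simp only [chi, h0, h1, hpt0, hpt1le, hpt1lt, hpt2]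

/-- increment of `phi` over an interval inside one dyadic constancy interval. -/
lemma phi_sub_dyadic {q m P k : ℕ} (hqP : q + 1 ≤ P) {a t : ℝ}
    (ha1 : (k:ℝ)/2^P ≤ a) (ha2 : a < ((k:ℝ)+1)/2^P) (hat : a ≤ t)
    (ht : t ≤ ((k:ℝ)+1)/2^P) :
    phi q m t - phi q m a = chi q m a * (t - a) := by
  rw [phi_sub]
  refine integral_constOn hat (fun s hs => ?_)
  exact chi_constOn hqP (le_trans ha1 hs.1) (lt_of_lt_of_le hs.2 ht) ha1 ha2


/-! ### Disjoint supports -/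

lemma chi_support {q n : ℕ} (hn : n ≠ 0) {t : ℝ} (h : chi q n t ≠ 0) :
    pt0 q n ≤ t ∧ t < pt2 q n := by
  have h1 := pt0_le_pt1 q n
  have h2 := pt1_le_pt2 q n
  simp only [chi, hn, if_false] at h
  by_cases hc1 : pt0 q n ≤ t ∧ t < pt1 q n
  · exact ⟨hc1.1, lt_of_lt_of_le hc1.2 h2⟩
  · rw [if_neg hc1] at h
    by_cases hc2 : pt1 q n ≤ t ∧ t < pt2 q n
    · exact ⟨le_trans h1 hc2.1, hc2.2⟩
    · rw [if_neg hc2] at h; exact absurd rfl h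

lemma floor_eq_of_mem {q n : ℕ} (hn : n ≠ 0) {t : ℝ}
    (h1 : pt0 q n ≤ t) (h2 : t < pt2 q n) : ⌊t * 2^q⌋ = (n:ℤ) - 1 := by
  have hpos := two_pow_pos q
  rw [Int.floor_eq_iff]
  constructor
  · have : ((n:ℝ) - 1) / 2^q ≤ t := h1
    push_cast
    rw [div_le_iff₀ hpos] at this
    linarith
  · have : t < (n:ℝ) / 2^q := h2
    push_cast
    rw [lt_div_iff₀ hpos] at this
    linarith

lemma chi_eq_zero_of_ne {q n : ℕ} (hn : n ≠ 0) {t : ℝ}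
    (hne : n ≠ (⌊t * 2^q⌋).toNat + 1) : chi q n t = 0 := by
  by_contra h
  obtain ⟨h1, h2⟩ := chi_support hn h
  have hf := floor_eq_of_mem hn h1 h2
  rw [hf] at hne
  omega

lemma phi_support {q n : ℕ} (hn : n ≠ 0) {t : ℝ} (h : phi q n t ≠ 0) :
    pt0 q n < t ∧ t < pt2 q n := by
  constructor
  · by_contra hc; push_neg at hc; exact h (phi_zero_left q n hn hc)
  · by_contra hc; push_neg at hc; exact h (phi_zero_right q n hn hc)

lemma phi_eq_zero_of_ne {q n : ℕ} (hn : n ≠ 0) {t : ℝ}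
    (hne : n ≠ (⌊t * 2^q⌋).toNat + 1) : phi q n t = 0 := by
  by_contra h
  obtain ⟨h1, h2⟩ := phi_support hn h
  have hf := floor_eq_of_mem hn h1.le h2
  rw [hf] at hne
  omega

lemma coeff_zero_left {E : Type*} [NormedAddCommGroup E] [NormedSpace ℝ E]
    (f : ℝ → E) (q : ℕ) : coeff f (q+1) 0 = 0 := by
  simp [coeff]

/-- a finset sum with at most one nonzero term. -/
lemma norm_sum_single_le {E : Type*} [NormedAddCommGroup E]
    (F : ℕ → E) (N n₀ : ℕ) (B : ℝ) (hB : 0 ≤ B)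
    (hzero : ∀ n, n ∈ Finset.range N → n ≠ n₀ → F n = 0)
    (hbound : n₀ ∈ Finset.range N → ‖F n₀‖ ≤ B) :
    ‖∑ n ∈ Finset.range N, F n‖ ≤ B := by
  by_cases h : n₀ ∈ Finset.range N
  · rw [Finset.sum_eq_single_of_mem n₀ h hzero]
    exact hbound h
  · rw [Finset.sum_eq_zero (fun n hn => hzero n hn (fun he => h (he ▸ hn)))]
    simpa using hB

section BlockLemmas
variable {E : Type*} [NormedAddCommGroup E] [NormedSpace ℝ E]

lemma block_succ (f : ℝ → E) (q : ℕ) (t : ℝ) :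
    block f (q+1) t = ∑ n ∈ Finset.range (2^q + 1), phi q n t • coeff f q n := rfl

lemma norm_block_le (f : ℝ → E) (q : ℕ) (t : ℝ) (M : ℝ) (hM : 0 ≤ M)
    (hc : ∀ n, n ≤ 2^(q+1) → ‖coeff f (q+1) n‖ ≤ M) :
    ‖block f (q+2) t‖ ≤ M / 2 := by
  rw [block_succ]
  refine norm_sum_single_le _ _ ((⌊t * 2^(q+1)⌋).toNat + 1) (M/2) (by positivity) ?_ ?_
  · intro n hn hne
    rcases Nat.eq_zero_or_pos n with h0 | h0
    · subst h0; rw [coeff_zero_left, smul_zero]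
    · rw [phi_eq_zero_of_ne (by omega) hne, zero_smul]
  · intro hn
    rw [Finset.mem_range] at hn
    rw [norm_smul, Real.norm_eq_abs]
    calc |phi (q+1) _ t| * ‖coeff f (q+1) _‖ ≤ (1/2) * M := by
          apply mul_le_mul (abs_phi_le_half (q+1) _ (by omega) t)
            (hc _ (by omega)) (norm_nonneg _) (by norm_num)
      _ = M / 2 := by ring

lemma pt0_eq_nat (p m : ℕ) (hm : m ≠ 0) : pt0 p m = ((m-1 : ℕ):ℝ)/2^p := by
  unfold pt0
  congr 1
  have : 1 ≤ m := Nat.one_le_iff_ne_zero.mpr hm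
  push_cast [Nat.cast_sub this]
  ring

lemma pt2_eq_nat (p m : ℕ) (hm : m ≠ 0) : pt2 p m = (((m-1 : ℕ):ℝ)+1)/2^p := by
  unfold pt2
  congr 1
  have : 1 ≤ m := Nat.one_le_iff_ne_zero.mpr hm
  push_cast [Nat.cast_sub this]
  ring

lemma pt1_mem (p m : ℕ) (hm : m ≠ 0) :
    pt0 p m ≤ pt1 p m ∧ pt1 p m < pt2 p m := by
  refine ⟨pt0_le_pt1 p m, ?_⟩
  have h := pt2_sub_pt1 p m
  have h2 : (0:ℝ) < 1/2^(p+1) := by positivity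
  linarith

lemma pt0_lt_pt2 (p m : ℕ) : pt0 p m < pt2 p m := by
  have h1 := pt1_sub_pt0 p m
  have h2 := pt2_sub_pt1 p m
  have h3 : (0:ℝ) < 1/2^(p+1) := by positivity
  linarith

/-- midpoint property of `phi (q+1)` on generation-`p` dyadic intervals. -/
lemma phi_midpoint (q n p m : ℕ) (hqp : q + 2 ≤ p) (hm : m ≠ 0) :
    phi (q+1) n (pt1 p m) = 2⁻¹ * (phi (q+1) n (pt0 p m) + phi (q+1) n (pt2 p m)) := by
  set k := m - 1 with hk
  have h0 : pt0 p m = (k:ℝ)/2^p := pt0_eq_nat p m hm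
  have h2 : pt2 p m = ((k:ℝ)+1)/2^p := pt2_eq_nat p m hm
  have hmem := pt1_mem p m hm
  have hA : phi (q+1) n (pt1 p m) - phi (q+1) n (pt0 p m)
      = chi (q+1) n (pt0 p m) * (pt1 p m - pt0 p m) :=
    phi_sub_dyadic (k := k) (by omega) (h0 ▸ le_refl _) (h2 ▸ pt0_lt_pt2 p m)
      (pt0_le_pt1 p m) (h2 ▸ (pt1_mem p m hm).2.le)
  have hB : phi (q+1) n (pt2 p m) - phi (q+1) n (pt0 p m)
      = chi (q+1) n (pt0 p m) * (pt2 p m - pt0 p m) :=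
    phi_sub_dyadic (k := k) (by omega) (h0 ▸ le_refl _) (h2 ▸ pt0_lt_pt2 p m)
      (pt0_le_pt2 p m) (h2 ▸ le_refl _)
  have hlen : pt2 p m - pt0 p m = 2 * (pt1 p m - pt0 p m) := by
    have e1 := pt1_sub_pt0 p m
    have e2 := pt2_sub_pt1 p m
    linarith
  rw [hlen] at hB
  linarith

lemma block_midpoint (f : ℝ → E) (q p m : ℕ) (hqp : q + 2 ≤ p) (hm : m ≠ 0) :
    block f (q+2) (pt1 p m)
      = (2⁻¹:ℝ) • (block f (q+2) (pt0 p m) + block f (q+2) (pt2 p m)) := by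
  rw [block_succ, block_succ, block_succ, ← Finset.sum_add_distrib, Finset.smul_sum]
  refine Finset.sum_congr rfl (fun n _ => ?_)
  rw [← add_smul, smul_smul, phi_midpoint q n p m hqp hm]

lemma block_sub_eq (f : ℝ → E) (q p m : ℕ) (hqp : q + 2 ≤ p) (hm : m ≠ 0) :
    block f (q+2) (pt2 p m) - block f (q+2) (pt0 p m)
      = ∑ n ∈ Finset.range (2^(q+1) + 1),
          (chi (q+1) n (pt0 p m) * (pt2 p m - pt0 p m)) • coeff f (q+1) n := by
  rw [block_succ, block_succ, ← Finset.sum_sub_distrib]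
  refine Finset.sum_congr rfl (fun n _ => ?_)
  rw [← sub_smul]
  congr 1
  exact phi_sub_dyadic (k := m-1) (by omega)
    ((pt0_eq_nat p m hm) ▸ le_refl _) ((pt2_eq_nat p m hm) ▸ pt0_lt_pt2 p m)
    (pt0_le_pt2 p m) ((pt2_eq_nat p m hm) ▸ le_refl _)

lemma pt2_sub_pt0 (p m : ℕ) : pt2 p m - pt0 p m = 1/2^p := by
  unfold pt2 pt0; field_simp; ring

lemma norm_block_sub_le (f : ℝ → E) (q p m : ℕ) (hqp : q + 2 ≤ p) (hm : m ≠ 0)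
    (M : ℝ) (hM : 0 ≤ M) (hc : ∀ n, n ≤ 2^(q+1) → ‖coeff f (q+1) n‖ ≤ M) :
    ‖block f (q+2) (pt2 p m) - block f (q+2) (pt0 p m)‖ ≤ 2^(q+1) * M / 2^p := by
  rw [block_sub_eq f q p m hqp hm]
  refine norm_sum_single_le _ _ ((⌊pt0 p m * 2^(q+1)⌋).toNat + 1) _
    (by positivity) ?_ ?_
  · intro n hn hne
    rcases Nat.eq_zero_or_pos n with h0 | h0
    · subst h0; rw [coeff_zero_left, smul_zero]
    · rw [chi_eq_zero_of_ne (by omega) hne, zero_mul, zero_smul]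
  · intro hn
    rw [Finset.mem_range] at hn
    rw [norm_smul, Real.norm_eq_abs, abs_mul, pt2_sub_pt0,
      abs_of_nonneg (by positivity : (0:ℝ) ≤ 1/2^p)]
    calc |chi (q+1) _ (pt0 p m)| * (1/2^p) * ‖coeff f (q+1) _‖
        ≤ 2^(q+1) * (1/2^p) * M := by
          apply mul_le_mul (mul_le_mul (abs_chi_le _ _ _) (le_refl _)
            (by positivity) (by positivity)) (hc _ (by omega)) (norm_nonneg _)
            (by positivity)
      _ = 2^(q+1) * M / 2^p := by ring
  end BlockLemmas


/-! ### rpow helpers and geometric series -/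

lemma rpow_of_npow (γ : ℝ) (n : ℕ) : (2:ℝ)^(-(γ*(n:ℝ))) = ((2:ℝ)^(-γ))^n := by
  rw [← Real.rpow_natCast ((2:ℝ)^(-γ)) n, ← Real.rpow_mul (by norm_num)]
  congr 1
  ring

lemma rpow_pos (x : ℝ) : (0:ℝ) < (2:ℝ)^x := Real.rpow_pos_of_pos two_pos x

lemma rpow_lt_one_of_pos {γ : ℝ} (hγ : 0 < γ) : (2:ℝ)^(-γ) < 1 :=
  Real.rpow_lt_one_of_one_lt_of_neg one_lt_two (by linarith)

lemma summable_rpow_mul (γ : ℝ) (hγ : 0 < γ) (c : ℝ) :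
    Summable (fun q : ℕ => (2:ℝ)^(-(γ*((q:ℝ)+1))) * c) := by
  have key : (fun q : ℕ => (2:ℝ)^(-(γ*((q:ℝ)+1))) * c)
      = fun q : ℕ => (2:ℝ)^(-γ) * (((2:ℝ)^(-γ))^q * c) := by
    funext q
    have : (2:ℝ)^(-(γ*((q:ℝ)+1))) = ((2:ℝ)^(-γ))^(q+1) := by
      rw [← rpow_of_npow]; congr 1; push_cast; ring
    rw [this, pow_succ]
    ring
  rw [key]
  exact (((summable_geometric_of_lt_one (rpow_pos (-γ)).le
    (rpow_lt_one_of_pos hγ)).mul_right c).mul_left _)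

lemma tsum_rpow_shift (γ : ℝ) (hγ : 0 < γ) (c : ℝ) (J : ℕ) :
    ∑' q : ℕ, (2:ℝ)^(-(γ*((q:ℝ)+(J:ℝ)))) * c
      = (2:ℝ)^(-(γ*(J:ℝ))) * (1 - (2:ℝ)^(-γ))⁻¹ * c := by
  have key : ∀ q : ℕ, (2:ℝ)^(-(γ*((q:ℝ)+(J:ℝ)))) * c
      = ((2:ℝ)^(-γ))^q * ((2:ℝ)^(-(γ*(J:ℝ))) * c) := by
    intro q
    rw [← rpow_of_npow, ← mul_assoc, ← Real.rpow_add two_pos]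
    congr 2
    ring
  simp only [key]
  rw [tsum_mul_right, tsum_geometric_of_lt_one (rpow_pos (-γ)).le (rpow_lt_one_of_pos hγ)]
  ring

/-- geometric sum bound for the low-frequency part. -/
lemma sum_rpow_low (γ : ℝ) (h0 : 0 < γ) (h2 : γ < 2) (p : ℕ) :
    ∑ q ∈ Finset.range (p-1), (2:ℝ)^((2-γ)*((q:ℝ)+1)) * ((1:ℝ)/2^p)^2
      ≤ (2:ℝ)^(-(γ*(p:ℝ))) * ((2:ℝ)^(2-γ) - 1)⁻¹ := by
  set x := (2:ℝ)^(2-γ) with hx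
  have hx1 : 1 < x := Real.one_lt_rpow_iff_of_pos two_pos |>.mpr (Or.inl ⟨one_lt_two, by linarith⟩)
  have hx0 : 0 < x := lt_trans one_pos hx1
  have key : ∀ q : ℕ, (2:ℝ)^((2-γ)*((q:ℝ)+1)) = x^(q+1) := by
    intro q
    rw [← Real.rpow_natCast x (q+1), hx, ← Real.rpow_mul (by norm_num)]
    congr 1
    push_cast
    ring
  have hsum : ∑ q ∈ Finset.range (p-1), (2:ℝ)^((2-γ)*((q:ℝ)+1)) * ((1:ℝ)/2^p)^2
      = (∑ q ∈ Finset.range (p-1), x^q) * (x * ((1:ℝ)/2^p)^2) := by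
    rw [Finset.sum_mul]
    refine Finset.sum_congr rfl (fun q _ => ?_)
    rw [key q, pow_succ]
    ring
  rcases Nat.eq_zero_or_pos p with hp | hp
  · subst hp
    simp only [Nat.zero_sub, Finset.range_zero, Finset.sum_empty] at hsum ⊢
    rw [hsum]
    have : (0:ℝ) < (2:ℝ)^(-(γ*((0:ℕ):ℝ))) * (x - 1)⁻¹ := by
      apply mul_pos (rpow_pos _)
      rw [inv_pos]; linarith
    simp only [Nat.cast_zero] at this ⊢
    linarith
  rw [hsum, geom_sum_eq hx1.ne' (p-1)]
  have e1 : x^(p-1) * x = x^p := by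
    rw [← pow_succ]
    congr 1
    omega
  have e2 : x^p * ((1:ℝ)/2^p)^2 = (2:ℝ)^(-(γ*(p:ℝ))) := by
    have h1 : x^p = (2:ℝ)^((2-γ)*(p:ℝ)) := by
      rw [hx, ← Real.rpow_natCast ((2:ℝ)^(2-γ)) p, ← Real.rpow_mul (by norm_num)]
    have h2 : ((1:ℝ)/2^p)^2 = (2:ℝ)^(-(2*(p:ℝ))) := by
      rw [one_div, ← Real.rpow_natCast (2:ℝ) p, ← Real.rpow_neg (by norm_num),
        ← Real.rpow_natCast ((2:ℝ)^(-((p:ℕ):ℝ))) 2, ← Real.rpow_mul (by norm_num)]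
      congr 1
      push_cast
      ring
    rw [h1, h2, ← Real.rpow_add two_pos]
    congr 1
    ring
  have hc : (0:ℝ) ≤ x * ((1:ℝ)/2^p)^2 := by positivity
  have hx1' : (0:ℝ) < x - 1 := by linarith
  calc (x^(p-1) - 1)/(x-1) * (x * ((1:ℝ)/2^p)^2)
      ≤ x^(p-1)/(x-1) * (x * ((1:ℝ)/2^p)^2) := by
        apply mul_le_mul_of_nonneg_right _ hc
        gcongr <;> linarith
    _ = (x^(p-1) * x) * ((1:ℝ)/2^p)^2 * (x-1)⁻¹ := by
        field_simp
    _ = (2:ℝ)^(-(γ*(p:ℝ))) * (x - 1)⁻¹ := by rw [e1, e2]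


/-! ### coefficient arithmetic -/

section CoeffArith
variable {E F : Type*} [NormedAddCommGroup E] [NormedSpace ℝ E]
  [NormedAddCommGroup F] [NormedSpace ℝ F]

lemma coeffBound_nonneg {γ K : ℝ} {f : ℝ → E} (h : CoeffBound γ f K) : 0 ≤ K :=
  le_trans (by positivity) h.1

lemma coeff_norm_le {γ K : ℝ} {f : ℝ → E} (h : CoeffBound γ f K) (p n : ℕ)
    (hn : n ≤ 2^p) : ‖coeff f p n‖ ≤ (2:ℝ)^(-(γ*(p:ℝ))) * K := by
  have h2 := h.2 p n hn
  have hx : (0:ℝ) < (2:ℝ)^(γ*(p:ℝ)) := rpow_pos _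
  have e : (2:ℝ)^(-(γ*(p:ℝ))) = ((2:ℝ)^(γ*(p:ℝ)))⁻¹ := Real.rpow_neg (by norm_num) _
  rw [e]
  rw [le_inv_mul_iff₀ hx]
  exact h2

lemma coeff_eq (f : ℝ → E) (p m : ℕ) (hm : m ≠ 0) :
    coeff f p m = f (pt1 p m) + f (pt1 p m) - f (pt0 p m) - f (pt2 p m) := by
  simp [coeff, hm]

lemma norm_coeff_le_of_bound (f : ℝ → E) (p m : ℕ) (hm : m ≠ 0) (B : ℝ)
    (h1 : ‖f (pt1 p m)‖ ≤ B) (h0 : ‖f (pt0 p m)‖ ≤ B) (h2 : ‖f (pt2 p m)‖ ≤ B) :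
    ‖coeff f p m‖ ≤ 4 * B := by
  rw [coeff_eq f p m hm]
  calc ‖f (pt1 p m) + f (pt1 p m) - f (pt0 p m) - f (pt2 p m)‖
      ≤ ‖f (pt1 p m) + f (pt1 p m) - f (pt0 p m)‖ + ‖f (pt2 p m)‖ := norm_sub_le _ _
    _ ≤ ‖f (pt1 p m) + f (pt1 p m)‖ + ‖f (pt0 p m)‖ + ‖f (pt2 p m)‖ := by
        have := norm_sub_le (f (pt1 p m) + f (pt1 p m)) (f (pt0 p m))
        linarith
    _ ≤ ‖f (pt1 p m)‖ + ‖f (pt1 p m)‖ + ‖f (pt0 p m)‖ + ‖f (pt2 p m)‖ := by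
        have := norm_add_le (f (pt1 p m)) (f (pt1 p m))
        linarith
    _ ≤ 4 * B := by linarith

lemma coeff_sum_smul {ι : Type*} (s : Finset ι) (g : ι → ℝ → ℝ) (c : ι → E)
    (p m : ℕ) (hm : m ≠ 0) :
    coeff (fun t => ∑ i ∈ s, g i t • c i) p m = ∑ i ∈ s, coeff (g i) p m • c i := by
  simp only [coeff_eq _ p m hm]
  rw [← Finset.sum_add_distrib, ← Finset.sum_sub_distrib, ← Finset.sum_sub_distrib]
  refine Finset.sum_congr rfl fun i _ => ?_
  module

lemma coeff_add_smul (f g : ℝ → E) (c : ℝ) (p m : ℕ) (hm : m ≠ 0) :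
    coeff (fun t => f t + c • g t) p m = coeff f p m + c • coeff g p m := by
  simp only [coeff_eq _ p m hm]
  module

/-- the key cancellation: the `(p,m)` coefficient of a product of generation-`q+1`
blocks, when `q+2 ≤ p`, is `-(1/2)` times the product of increments. -/
lemma coeff_g_eq (v : ℝ → (E →L[ℝ] F)) (w : ℝ → E) (q p m : ℕ)
    (hqp : q + 2 ≤ p) (hm : m ≠ 0) :
    coeff (fun t => (block v (q+2) t) (block w (q+2) t)) p m
      = -(2⁻¹:ℝ) • ((block v (q+2) (pt2 p m) - block v (q+2) (pt0 p m))
          (block w (q+2) (pt2 p m) - block w (q+2) (pt0 p m))) := by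
  rw [coeff_eq _ p m hm, block_midpoint v q p m hqp hm, block_midpoint w q p m hqp hm]
  set A0 := block v (q+2) (pt0 p m)
  set A2 := block v (q+2) (pt2 p m)
  set B0 := block w (q+2) (pt0 p m)
  set B2 := block w (q+2) (pt2 p m)
  simp only [ContinuousLinearMap.smul_apply, ContinuousLinearMap.add_apply,
    ContinuousLinearMap.sub_apply, map_add, _root_.map_smul, map_sub]
  module

end CoeffArith


/-! ### the generation-0 part -/

lemma integral_congr_Ico {f g : ℝ → ℝ} {a b : ℝ} (hab : a ≤ b)
    (h : ∀ s ∈ Ico a b, f s = g s) :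
    ∫ s in a..b, f s = ∫ s in a..b, g s := by
  apply intervalIntegral.integral_congr_ae
  have hb : ∀ᵐ x : ℝ, x ≠ b := by
    refine ae_iff.mpr ?_
    simp [Real.volume_singleton]
  filter_upwards [hb] with x hx hxI
  rw [uIoc_of_le hab] at hxI
  exact h x ⟨hxI.1.le, lt_of_le_of_ne hxI.2 hx⟩

lemma integral_affineOn {f : ℝ → ℝ} {a b C D : ℝ} (hab : a ≤ b)
    (h : ∀ s ∈ Ico a b, f s = C + D * (s - a)) :
    ∫ s in a..b, f s = C * (b-a) + D * (b-a)^2 / 2 := by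
  rw [integral_congr_Ico hab h]
  have hF : ∀ x ∈ uIcc a b, HasDerivAt (fun s => C*s + D/2*(s-a)^2) (C + D * (x - a)) x := by
    intro x _
    have h1 : HasDerivAt (fun s : ℝ => C*s) C x := by
      simpa using (hasDerivAt_id x).const_mul C
    have h2 : HasDerivAt (fun s : ℝ => (s-a)^2) (2*(x-a)) x := by
      have := ((hasDerivAt_id x).sub_const a).fun_pow 2
      simpa using this
    have h3 := h1.add (h2.const_mul (D/2))
    have h4 : C + D/2*(2*(x-a)) = C + D*(x-a) := by ring
    exact h4 ▸ h3
  rw [intervalIntegral.integral_eq_sub_of_hasDerivAt hF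
    ((Continuous.intervalIntegrable (by continuity) a b))]
  ring

lemma integrable_phi_chi (mb nb : ℕ) (a b : ℝ) :
    IntervalIntegrable (fun s => phi 0 mb s * chi 0 nb s) volume a b := by
  rw [intervalIntegrable_iff]
  apply Measure.integrableOn_of_bounded (M := 1) measure_Ioc_lt_top.ne
    (((continuous_phi 0 mb).measurable.mul (measurable_chi 0 nb)).aestronglyMeasurable)
  refine ae_of_all _ fun t => ?_
  rw [Real.norm_eq_abs, Pi.mul_apply, abs_mul]
  have h1 := abs_phi_le_one 0 mb t
  have h2 := abs_chi_le 0 nb t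
  rw [pow_zero] at h2
  calc |phi 0 mb t| * |chi 0 nb t| ≤ 1 * 1 :=
        mul_le_mul h1 h2 (abs_nonneg _) (by norm_num)
    _ = 1 := by norm_num

lemma abs_h_le (mb nb : ℕ) {t : ℝ} (ht : t ∈ Icc (0:ℝ) 1) :
    |∫ s in (0:ℝ)..t, phi 0 mb s * chi 0 nb s| ≤ 1 := by
  have h := intervalIntegral.norm_integral_le_of_norm_le_const (a := 0) (b := t) (C := 1)
    (f := fun s => phi 0 mb s * chi 0 nb s) (fun x _ => by
      rw [Real.norm_eq_abs, abs_mul]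
      have h1 := abs_phi_le_one 0 mb x
      have h2 := abs_chi_le 0 nb x
      rw [pow_zero] at h2
      calc |phi 0 mb x| * |chi 0 nb x| ≤ 1 * 1 :=
            mul_le_mul h1 h2 (abs_nonneg _) (by norm_num)
        _ = 1 := by norm_num)
  rw [Real.norm_eq_abs] at h
  calc |∫ s in (0:ℝ)..t, phi 0 mb s * chi 0 nb s| ≤ 1 * |t - 0| := h
    _ ≤ 1 := by
        rw [one_mul, sub_zero, abs_of_nonneg ht.1]
        exact ht.2

lemma coeff_h_le (mb nb p m : ℕ) (hp : 1 ≤ p) (hm : m ≠ 0) :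
    |coeff (fun t => ∫ s in (0:ℝ)..t, phi 0 mb s * chi 0 nb s) p m| ≤ ((1:ℝ)/2^p)^2 := by
  set k := m - 1 with hk
  have h0 : pt0 p m = (k:ℝ)/2^p := pt0_eq_nat p m hm
  have h2 : pt2 p m = ((k:ℝ)+1)/2^p := pt2_eq_nat p m hm
  have ht01 := pt0_le_pt1 p m
  have ht12 := (pt1_mem p m hm).2
  have ht02 := pt0_lt_pt2 p m
  set c := chi 0 nb (pt0 p m) with hc
  set d := chi 0 mb (pt0 p m) with hd
  set A := phi 0 mb (pt0 p m) with hA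
  have hchi : ∀ s, pt0 p m ≤ s → s < pt2 p m → chi 0 nb s = c := by
    intro s hs1 hs2
    exact chi_constOn hp (h0 ▸ hs1) (h2 ▸ hs2) (h0 ▸ le_refl _) (h2 ▸ ht02)
  have hphi : ∀ s, pt0 p m ≤ s → s ≤ pt2 p m → phi 0 mb s = A + d * (s - pt0 p m) := by
    intro s hs1 hs2
    have := phi_sub_dyadic (q := 0) (m := mb) (P := p) (k := k) hp
      (h0 ▸ le_refl _) (h2 ▸ ht02) hs1 (h2 ▸ hs2)
    linarith
  have hf1 : ∀ s ∈ Ico (pt0 p m) (pt1 p m),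
      phi 0 mb s * chi 0 nb s = c * A + (c*d) * (s - pt0 p m) := by
    intro s hs
    rw [hchi s hs.1 (lt_trans hs.2 ht12), hphi s hs.1 (le_trans hs.2.le ht12.le)]
    ring
  have hf2 : ∀ s ∈ Ico (pt1 p m) (pt2 p m),
      phi 0 mb s * chi 0 nb s
        = (c * A + (c*d)*(pt1 p m - pt0 p m)) + (c*d) * (s - pt1 p m) := by
    intro s hs
    rw [hchi s (le_trans ht01 hs.1) hs.2, hphi s (le_trans ht01 hs.1) hs.2.le]
    ring
  have I1 := integral_affineOn ht01 hf1
  have I2 := integral_affineOn ht12.le hf2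
  have e1 : (fun t => ∫ s in (0:ℝ)..t, phi 0 mb s * chi 0 nb s) (pt1 p m)
      - (fun t => ∫ s in (0:ℝ)..t, phi 0 mb s * chi 0 nb s) (pt0 p m)
      = ∫ s in (pt0 p m)..(pt1 p m), phi 0 mb s * chi 0 nb s :=
    intervalIntegral.integral_interval_sub_left (integrable_phi_chi mb nb 0 _)
      (integrable_phi_chi mb nb 0 _)
  have e2 : (fun t => ∫ s in (0:ℝ)..t, phi 0 mb s * chi 0 nb s) (pt2 p m)
      - (fun t => ∫ s in (0:ℝ)..t, phi 0 mb s * chi 0 nb s) (pt1 p m)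
      = ∫ s in (pt1 p m)..(pt2 p m), phi 0 mb s * chi 0 nb s :=
    intervalIntegral.integral_interval_sub_left (integrable_phi_chi mb nb 0 _)
      (integrable_phi_chi mb nb 0 _)
  have lens1 := pt1_sub_pt0 p m
  have lens2 := pt2_sub_pt1 p m
  have key : coeff (fun t => ∫ s in (0:ℝ)..t, phi 0 mb s * chi 0 nb s) p m
      = -(c*d) * (1/2^(p+1))^2 := by
    rw [coeff_eq _ p m hm]
    have := e1
    have := e2
    rw [I1] at e1
    rw [I2] at e2
    rw [lens1] at e1
    rw [lens1, lens2] at e2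
    linarith [e1, e2]
  rw [key, abs_mul, abs_neg, abs_mul]
  have hc1 : |c| ≤ 1 := by have := abs_chi_le 0 nb (pt0 p m); rwa [pow_zero] at this
  have hd1 : |d| ≤ 1 := by have := abs_chi_le 0 mb (pt0 p m); rwa [pow_zero] at this
  have habs : |((1:ℝ)/2^(p+1))^2| = ((1:ℝ)/2^(p+1))^2 := abs_of_nonneg (by positivity)
  rw [habs]
  have hps : ((1:ℝ)/2^(p+1))^2 ≤ ((1:ℝ)/2^p)^2 := by
    have hbase : (1:ℝ)/2^(p+1) ≤ 1/2^p :=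
      one_div_le_one_div_of_le (two_pow_pos p) (pow_le_pow_right₀ one_le_two (Nat.le_succ p))
    exact pow_le_pow_left₀ (by positivity) hbase 2
  calc |c| * |d| * ((1:ℝ)/2^(p+1))^2 ≤ 1 * 1 * ((1:ℝ)/2^p)^2 := by
        apply mul_le_mul (mul_le_mul hc1 hd1 (abs_nonneg _) (by norm_num)) hps
          (by positivity) (by norm_num)
    _ = ((1:ℝ)/2^p)^2 := by ring


/-! ### assembled block/product bounds -/

section MainAux
variable {E F : Type*} [NormedAddCommGroup E] [NormedSpace ℝ E]
  [NormedAddCommGroup F] [NormedSpace ℝ F] [CompleteSpace F]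

lemma block_norm {γ K : ℝ} {f : ℝ → E} (hf : CoeffBound γ f K) (q : ℕ) (t : ℝ) :
    ‖block f (q+2) t‖ ≤ (2:ℝ)^(-(γ*((q:ℝ)+1))) * K / 2 := by
  have hK := coeffBound_nonneg hf
  have h := norm_block_le f q t ((2:ℝ)^(-(γ*(((q+1):ℕ):ℝ))) * K)
    (by positivity) (fun n hn => coeff_norm_le hf (q+1) n hn)
  have e : (((q+1):ℕ):ℝ) = (q:ℝ)+1 := by push_cast; ring
  rw [e] at h
  exact h

lemma g_norm {α β Kv Kw : ℝ} {v : ℝ → (E →L[ℝ] F)} {w : ℝ → E}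
    (hv : CoeffBound α v Kv) (hw : CoeffBound β w Kw) (q : ℕ) (t : ℝ) :
    ‖(block v (q+2) t) (block w (q+2) t)‖
      ≤ (2:ℝ)^(-((α+β)*((q:ℝ)+1))) * (Kv*Kw/4) := by
  have hKv := coeffBound_nonneg hv
  have hKw := coeffBound_nonneg hw
  have h1 := block_norm hv q t
  have h2 := block_norm hw q t
  have hab : (2:ℝ)^(-(α*((q:ℝ)+1))) * (2:ℝ)^(-(β*((q:ℝ)+1)))
      = (2:ℝ)^(-((α+β)*((q:ℝ)+1))) := by
    rw [← Real.rpow_add two_pos]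
    congr 1
    ring
  calc ‖(block v (q+2) t) (block w (q+2) t)‖
      ≤ ‖block v (q+2) t‖ * ‖block w (q+2) t‖ := ContinuousLinearMap.le_opNorm _ _
    _ ≤ ((2:ℝ)^(-(α*((q:ℝ)+1))) * Kv / 2) * ((2:ℝ)^(-(β*((q:ℝ)+1))) * Kw / 2) := by
        apply mul_le_mul h1 h2 (norm_nonneg _) (by positivity)
    _ = ((2:ℝ)^(-(α*((q:ℝ)+1))) * (2:ℝ)^(-(β*((q:ℝ)+1)))) * (Kv*Kw/4) := by ring
    _ = _ := by rw [hab]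

lemma g_summable {α β Kv Kw : ℝ} {v : ℝ → (E →L[ℝ] F)} {w : ℝ → E}
    (hγ : 0 < α + β) (hv : CoeffBound α v Kv) (hw : CoeffBound β w Kw) (t : ℝ) :
    Summable (fun q : ℕ => (block v (q+2) t) (block w (q+2) t)) :=
  Summable.of_norm_bounded (summable_rpow_mul (α+β) hγ (Kv*Kw/4))
    (fun q => g_norm hv hw q t)

lemma g_norm_summable {α β Kv Kw : ℝ} {v : ℝ → (E →L[ℝ] F)} {w : ℝ → E}
    (hγ : 0 < α + β) (hv : CoeffBound α v Kv) (hw : CoeffBound β w Kw) (t : ℝ) :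
    Summable (fun q : ℕ => ‖(block v (q+2) t) (block w (q+2) t)‖) :=
  Summable.of_nonneg_of_le (fun q => norm_nonneg _) (fun q => g_norm hv hw q t)
    (summable_rpow_mul (α+β) hγ (Kv*Kw/4))

lemma norm_tsum_g_le {α β Kv Kw : ℝ} {v : ℝ → (E →L[ℝ] F)} {w : ℝ → E}
    (hγ : 0 < α + β) (hv : CoeffBound α v Kv) (hw : CoeffBound β w Kw) (t : ℝ) :
    ‖∑' q : ℕ, (block v (q+2) t) (block w (q+2) t)‖
      ≤ (1 - (2:ℝ)^(-(α+β)))⁻¹ * (Kv*Kw/4) := by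
  have hKK : (0:ℝ) ≤ Kv*Kw/4 := by
    have := coeffBound_nonneg hv
    have := coeffBound_nonneg hw
    positivity
  have hr1 : (2:ℝ)^(-(α+β)) < 1 := rpow_lt_one_of_pos hγ
  have hinv : (0:ℝ) ≤ (1 - (2:ℝ)^(-(α+β)))⁻¹ := by
    apply inv_nonneg.mpr
    linarith
  have hshift := tsum_rpow_shift (α+β) hγ (Kv*Kw/4) 1
  push_cast at hshift
  calc ‖∑' q : ℕ, (block v (q+2) t) (block w (q+2) t)‖
      ≤ ∑' q : ℕ, ‖(block v (q+2) t) (block w (q+2) t)‖ :=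
        norm_tsum_le_tsum_norm (g_norm_summable hγ hv hw t)
    _ ≤ ∑' q : ℕ, (2:ℝ)^(-((α+β)*((q:ℝ)+1))) * (Kv*Kw/4) :=
        Summable.tsum_le_tsum (fun q => g_norm hv hw q t) (g_norm_summable hγ hv hw t)
          (summable_rpow_mul (α+β) hγ _)
    _ = (2:ℝ)^(-((α+β)*1)) * (1 - (2:ℝ)^(-(α+β)))⁻¹ * (Kv*Kw/4) := hshift
    _ ≤ 1 * (1 - (2:ℝ)^(-(α+β)))⁻¹ * (Kv*Kw/4) := by
        apply mul_le_mul_of_nonneg_right (mul_le_mul_of_nonneg_right ?_ hinv) hKK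
        rw [mul_one]
        exact (rpow_lt_one_of_pos hγ).le
    _ = (1 - (2:ℝ)^(-(α+β)))⁻¹ * (Kv*Kw/4) := by ring

lemma continuous_block (f : ℝ → E) (k : ℕ) : Continuous (block f k) := by
  cases k with
  | zero => exact continuous_const
  | succ q =>
    rw [show block f (q+1) = fun t => ∑ n ∈ Finset.range (2^q + 1),
      phi q n t • coeff f q n from rfl]
    exact continuous_finset_sum _ fun n _ => (continuous_phi q n).smul continuous_const

lemma block_at_zero (f : ℝ → E) (q : ℕ) : block f (q+1) 0 = 0 := by
  rw [block_succ]
  refine Finset.sum_eq_zero fun n _ => ?_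
  rw [phi_zero, zero_smul]

lemma one_div_two_pow_sq (p : ℕ) : ((1:ℝ)/2^p)^2 = (2:ℝ)^(-(2*(p:ℝ))) := by
  rw [one_div, ← Real.rpow_natCast (2:ℝ) p, ← Real.rpow_neg (by norm_num),
    ← Real.rpow_natCast ((2:ℝ)^(-((p:ℕ):ℝ))) 2, ← Real.rpow_mul (by norm_num)]
  congr 1
  push_cast
  ring

end MainAux

end SchAux

open SchAux
set_option maxHeartbeats 1000000

open Sch in
/-- For any `α, β ∈ (0,1)` (no restriction on `α + β`), the symmetric part
`S(v,w) = ∑_{m,n≤1} v_{0m}w_{0n}∫φ_{0m}dφ_{0n} + (1/2)∑_{p≥1} Δ_p v Δ_p w` is a bounded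
bilinear operator from `C^α × C^β` to `C^{α+β}`: `‖S(v,w)‖_{α+β} ≲ ‖v‖_α ‖w‖_β`. -/
theorem symmetric_part_bound (α β : ℝ) (hα0 : 0 < α) (hα1 : α < 1) (hβ0 : 0 < β) (hβ1 : β < 1) :
    ∃ C > (0:ℝ), ∀ (d n : ℕ)
      (v : ℝ → (EuclideanSpace ℝ (Fin d) →L[ℝ] EuclideanSpace ℝ (Fin n)))
      (w : ℝ → EuclideanSpace ℝ (Fin d)) (Kv Kw : ℝ),
      ContinuousOn v (Icc 0 1) → ContinuousOn w (Icc 0 1) →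
      CoeffBound α v Kv → CoeffBound β w Kw →
      (∀ t ∈ Icc (0:ℝ) 1,
        Summable fun p : ℕ => (block v (p + 2) t) (block w (p + 2) t)) ∧
      ContinuousOn (symPart v w) (Icc 0 1) ∧
      CoeffBound (α + β) (symPart v w) (C * Kv * Kw) := by
  have hγ0 : 0 < α + β := by linarith
  have hγ2 : α + β < 2 := by linarith
  have hr1 : (2:ℝ)^(-(α+β)) < 1 := rpow_lt_one_of_pos hγ0
  have hr0 : (0:ℝ) < (2:ℝ)^(-(α+β)) := rpow_pos _
  have hx1 : (1:ℝ) < (2:ℝ)^(2-(α+β)) :=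
    (Real.one_lt_rpow_iff_of_pos two_pos).mpr (Or.inl ⟨one_lt_two, by linarith⟩)
  have hinv1 : (0:ℝ) < (1 - (2:ℝ)^(-(α+β)))⁻¹ := inv_pos.mpr (by linarith)
  have hinv2 : (0:ℝ) < ((2:ℝ)^(2-(α+β)) - 1)⁻¹ := inv_pos.mpr (by linarith)
  refine ⟨40 + 5*(1 - (2:ℝ)^(-(α+β)))⁻¹ + ((2:ℝ)^(2-(α+β)) - 1)⁻¹, by linarith, ?_⟩
  intro d n v w Kv Kw hvc hwc hv hw
  have hKv := coeffBound_nonneg hv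
  have hKw := coeffBound_nonneg hw
  have hKK : (0:ℝ) ≤ Kv * Kw := mul_nonneg hKv hKw
  have hCKK : (0:ℝ) ≤ (40 + 5*(1 - (2:ℝ)^(-(α+β)))⁻¹ + ((2:ℝ)^(2-(α+β)) - 1)⁻¹) * Kv * Kw := by
    rw [mul_assoc]
    exact mul_nonneg (by linarith) hKK
  have hsum : ∀ t : ℝ, Summable (fun q : ℕ => (block v (q+2) t) (block w (q+2) t)) :=
    fun t => g_summable hγ0 hv hw t
  -- single term of the generation-0 part
  have hterm : ∀ mb nb : ℕ, mb ≤ 1 → nb ≤ 1 →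
      ‖(coeff v 0 mb) (coeff w 0 nb)‖ ≤ Kv * Kw := by
    intro mb nb hmb hnb
    have e0 : (2:ℝ)^(-(α*((0:ℕ):ℝ))) = 1 := by simp
    have e0' : (2:ℝ)^(-(β*((0:ℕ):ℝ))) = 1 := by simp
    calc ‖(coeff v 0 mb) (coeff w 0 nb)‖ ≤ ‖coeff v 0 mb‖ * ‖coeff w 0 nb‖ :=
        ContinuousLinearMap.le_opNorm _ _
      _ ≤ ((2:ℝ)^(-(α*((0:ℕ):ℝ))) * Kv) * (((2:ℝ)^(-(β*((0:ℕ):ℝ)))) * Kw) := by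
          apply mul_le_mul (coeff_norm_le hv 0 mb (by simpa using hmb))
            (coeff_norm_le hw 0 nb (by simpa using hnb)) (norm_nonneg _)
          exact mul_nonneg (rpow_pos _).le hKv
      _ = Kv * Kw := by rw [e0, e0']; ring
  -- sup bound on [0,1]
  have hSup : ∀ t ∈ Icc (0:ℝ) 1, ‖symPart v w t‖
      ≤ (8 + (1 - (2:ℝ)^(-(α+β)))⁻¹) * (Kv*Kw) := by
    intro t ht
    have hA : ‖∑ mb ∈ Finset.range 2, ∑ nb ∈ Finset.range 2,
        (∫ s in (0:ℝ)..t, phi 0 mb s * chi 0 nb s) • ((coeff v 0 mb) (coeff w 0 nb))‖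
        ≤ 4 * (Kv*Kw) := by
      calc ‖∑ mb ∈ Finset.range 2, ∑ nb ∈ Finset.range 2,
          (∫ s in (0:ℝ)..t, phi 0 mb s * chi 0 nb s) • ((coeff v 0 mb) (coeff w 0 nb))‖
          ≤ ∑ mb ∈ Finset.range 2, ‖∑ nb ∈ Finset.range 2,
            (∫ s in (0:ℝ)..t, phi 0 mb s * chi 0 nb s) • ((coeff v 0 mb) (coeff w 0 nb))‖ :=
          norm_sum_le _ _
        _ ≤ ∑ mb ∈ Finset.range 2, ∑ nb ∈ Finset.range 2,
            ‖(∫ s in (0:ℝ)..t, phi 0 mb s * chi 0 nb s) • ((coeff v 0 mb) (coeff w 0 nb))‖ :=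
          Finset.sum_le_sum fun mb _ => norm_sum_le _ _
        _ ≤ ∑ _mb ∈ Finset.range 2, ∑ _nb ∈ Finset.range 2, (Kv*Kw) := by
          refine Finset.sum_le_sum fun mb hmb => Finset.sum_le_sum fun nb hnb => ?_
          rw [norm_smul, Real.norm_eq_abs]
          rw [Finset.mem_range] at hmb hnb
          calc |∫ s in (0:ℝ)..t, phi 0 mb s * chi 0 nb s| * ‖(coeff v 0 mb) (coeff w 0 nb)‖
              ≤ 1 * (Kv*Kw) :=
                mul_le_mul (abs_h_le mb nb ht)
                  (hterm mb nb (by omega) (by omega))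
                  (norm_nonneg _) (by norm_num)
            _ = Kv * Kw := one_mul _
        _ = 4 * (Kv*Kw) := by simp [Finset.sum_const]; ring
    have hT := norm_tsum_g_le hγ0 hv hw t
    have hTle : ‖(1/2:ℝ) • ∑' (q:ℕ), (block v (q+2) t) (block w (q+2) t)‖
        ≤ (1 - (2:ℝ)^(-(α+β)))⁻¹ * (Kv*Kw) := by
      rw [norm_smul]
      have hhalf : ‖(1/2:ℝ)‖ = 1/2 := by rw [Real.norm_eq_abs]; norm_num
      rw [hhalf]
      have h8 : (0:ℝ) ≤ (1 - (2:ℝ)^(-(α+β)))⁻¹ * (Kv*Kw) := mul_nonneg hinv1.le hKK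
      nlinarith [hT]
    show ‖(∑ mb ∈ Finset.range 2, ∑ nb ∈ Finset.range 2,
        (∫ s in (0:ℝ)..t, phi 0 mb s * chi 0 nb s) • ((coeff v 0 mb) (coeff w 0 nb)))
        + (1/2:ℝ) • ∑' (q:ℕ), (block v (q+2) t) (block w (q+2) t)‖
        ≤ (8 + (1 - (2:ℝ)^(-(α+β)))⁻¹) * (Kv*Kw)
    refine le_trans (norm_add_le _ _) ?_
    nlinarith [hA, hTle]
  -- symPart at 0 vanishes
  have hS0 : symPart v w 0 = 0 := by
    have hb : ∀ q : ℕ, (block v (q+2) 0) (block w (q+2) 0) = 0 := by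
      intro q
      rw [block_at_zero v (q+1)]
      simp
    simp only [symPart, intervalIntegral.integral_same, zero_smul,
      Finset.sum_const_zero, zero_add]
    rw [tsum_congr hb]
    simp
  -- the main estimate for p ≥ 1, m ≠ 0
  have hmain : ∀ p m : ℕ, 1 ≤ p → m ≠ 0 →
      (2:ℝ)^((α+β)*(p:ℝ)) * ‖coeff (symPart v w) p m‖
        ≤ (40 + 5*(1 - (2:ℝ)^(-(α+β)))⁻¹ + ((2:ℝ)^(2-(α+β)) - 1)⁻¹) * Kv * Kw := by
    intro p m hp hm
    -- bound on each coefficient of the tsum part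
    have hu : ∀ q : ℕ, ‖coeff (fun t => (block v (q+2) t) (block w (q+2) t)) p m‖
        ≤ (if q+2 ≤ p then (2:ℝ)^((2-(α+β))*((q:ℝ)+1)) * ((1:ℝ)/2^p)^2 * (Kv*Kw/2)
            else (2:ℝ)^(-((α+β)*((q:ℝ)+1))) * (Kv*Kw)) := by
      intro q
      by_cases hq : q + 2 ≤ p
      · rw [if_pos hq, coeff_g_eq v w q p m hq hm, norm_smul]
        have hMv : (0:ℝ) ≤ (2:ℝ)^(-(α*(((q+1):ℕ):ℝ))) * Kv := mul_nonneg (rpow_pos _).le hKv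
        have hMw : (0:ℝ) ≤ (2:ℝ)^(-(β*(((q+1):ℕ):ℝ))) * Kw := mul_nonneg (rpow_pos _).le hKw
        have hnv := norm_block_sub_le v q p m hq hm ((2:ℝ)^(-(α*(((q+1):ℕ):ℝ))) * Kv) hMv
          (fun nn hnn => coeff_norm_le hv (q+1) nn hnn)
        have hnw := norm_block_sub_le w q p m hq hm ((2:ℝ)^(-(β*(((q+1):ℕ):ℝ))) * Kw) hMw
          (fun nn hnn => coeff_norm_le hw (q+1) nn hnn)
        have hhalf : ‖-(2⁻¹:ℝ)‖ = 2⁻¹ := by rw [Real.norm_eq_abs]; norm_num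
        rw [hhalf]
        have key : (2:ℝ)^(q+1) * ((2:ℝ)^(-(α*(((q+1):ℕ):ℝ))) * Kv) / 2^p
            * ((2:ℝ)^(q+1) * ((2:ℝ)^(-(β*(((q+1):ℕ):ℝ))) * Kw) / 2^p)
            = (2:ℝ)^((2-(α+β))*((q:ℝ)+1)) * ((1:ℝ)/2^p)^2 * (Kv*Kw) := by
          have e : (2:ℝ)^(q+1) * (2:ℝ)^(-(α*(((q+1):ℕ):ℝ)))
              * ((2:ℝ)^(q+1) * (2:ℝ)^(-(β*(((q+1):ℕ):ℝ))))
              = (2:ℝ)^((2-(α+β))*((q:ℝ)+1)) := by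
            rw [← Real.rpow_natCast (2:ℝ) (q+1), ← Real.rpow_add two_pos,
              ← Real.rpow_add two_pos, ← Real.rpow_add two_pos]
            congr 1
            push_cast
            ring
          calc (2:ℝ)^(q+1) * ((2:ℝ)^(-(α*(((q+1):ℕ):ℝ))) * Kv) / 2^p
              * ((2:ℝ)^(q+1) * ((2:ℝ)^(-(β*(((q+1):ℕ):ℝ))) * Kw) / 2^p)
              = ((2:ℝ)^(q+1) * (2:ℝ)^(-(α*(((q+1):ℕ):ℝ)))
                  * ((2:ℝ)^(q+1) * (2:ℝ)^(-(β*(((q+1):ℕ):ℝ)))))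
                * ((1:ℝ)/2^p)^2 * (Kv*Kw) := by ring
            _ = _ := by rw [e]
        calc (2⁻¹:ℝ) * ‖(block v (q+2) (pt2 p m) - block v (q+2) (pt0 p m))
              (block w (q+2) (pt2 p m) - block w (q+2) (pt0 p m))‖
            ≤ 2⁻¹ * (‖block v (q+2) (pt2 p m) - block v (q+2) (pt0 p m)‖
                * ‖block w (q+2) (pt2 p m) - block w (q+2) (pt0 p m)‖) := by
              apply mul_le_mul_of_nonneg_left (ContinuousLinearMap.le_opNorm _ _) (by norm_num)
          _ ≤ 2⁻¹ * ((2:ℝ)^(q+1) * ((2:ℝ)^(-(α*(((q+1):ℕ):ℝ))) * Kv) / 2^p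
                * ((2:ℝ)^(q+1) * ((2:ℝ)^(-(β*(((q+1):ℕ):ℝ))) * Kw) / 2^p)) := by
              apply mul_le_mul_of_nonneg_left ?_ (by norm_num)
              apply mul_le_mul hnv hnw (norm_nonneg _) ?_
              positivity
          _ = (2:ℝ)^((2-(α+β))*((q:ℝ)+1)) * ((1:ℝ)/2^p)^2 * (Kv*Kw/2) := by
              rw [key]
              ring
      · rw [if_neg hq]
        have hb := fun t : ℝ => g_norm hv hw q t
        have h4 := norm_coeff_le_of_bound
          (fun t => (block v (q+2) t) (block w (q+2) t)) p m hm
          ((2:ℝ)^(-((α+β)*((q:ℝ)+1))) * (Kv*Kw/4)) (hb _) (hb _) (hb _)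
        have he : 4 * ((2:ℝ)^(-((α+β)*((q:ℝ)+1))) * (Kv*Kw/4))
            = (2:ℝ)^(-((α+β)*((q:ℝ)+1))) * (Kv*Kw) := by ring
        linarith
    have hu0 : ∀ q : ℕ, (0:ℝ)
        ≤ (if q+2 ≤ p then (2:ℝ)^((2-(α+β))*((q:ℝ)+1)) * ((1:ℝ)/2^p)^2 * (Kv*Kw/2)
            else (2:ℝ)^(-((α+β)*((q:ℝ)+1))) * (Kv*Kw)) := by
      intro q
      split_ifs
      · exact mul_nonneg (mul_nonneg (rpow_pos _).le (by positivity)) (by linarith)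
      · exact mul_nonneg (rpow_pos _).le hKK
    have hus : Summable (fun q : ℕ =>
        (if q+2 ≤ p then (2:ℝ)^((2-(α+β))*((q:ℝ)+1)) * ((1:ℝ)/2^p)^2 * (Kv*Kw/2)
            else (2:ℝ)^(-((α+β)*((q:ℝ)+1))) * (Kv*Kw))) := by
      rw [← summable_nat_add_iff p]
      apply Summable.of_nonneg_of_le (fun q => hu0 _) ?_
        (summable_rpow_mul (α+β) hγ0 (Kv*Kw))
      intro q
      rw [if_neg (by omega)]
      apply mul_le_mul_of_nonneg_right ?_ hKK
      apply Real.rpow_le_rpow_left_iff one_lt_two |>.mpr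
      have hc : ((q:ℝ)) ≤ (((q+p):ℕ):ℝ) := by push_cast; linarith [Nat.cast_nonneg (α := ℝ) p]
      nlinarith [hγ0.le, hc]
    -- the tsum of the bounds
    have hfin : ∑ q ∈ Finset.range (p-1),
        (if q+2 ≤ p then (2:ℝ)^((2-(α+β))*((q:ℝ)+1)) * ((1:ℝ)/2^p)^2 * (Kv*Kw/2)
            else (2:ℝ)^(-((α+β)*((q:ℝ)+1))) * (Kv*Kw))
        ≤ (2:ℝ)^(-((α+β)*(p:ℝ))) * (((2:ℝ)^(2-(α+β)) - 1)⁻¹ * (Kv*Kw/2)) := by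
      have he : ∀ q ∈ Finset.range (p-1),
          (if q+2 ≤ p then (2:ℝ)^((2-(α+β))*((q:ℝ)+1)) * ((1:ℝ)/2^p)^2 * (Kv*Kw/2)
              else (2:ℝ)^(-((α+β)*((q:ℝ)+1))) * (Kv*Kw))
          = (2:ℝ)^((2-(α+β))*((q:ℝ)+1)) * ((1:ℝ)/2^p)^2 * (Kv*Kw/2) := by
        intro q hq
        rw [Finset.mem_range] at hq
        rw [if_pos (by omega)]
      rw [Finset.sum_congr rfl he]
      have hs : ∑ q ∈ Finset.range (p-1),
          (2:ℝ)^((2-(α+β))*((q:ℝ)+1)) * ((1:ℝ)/2^p)^2 * (Kv*Kw/2)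
          = (∑ q ∈ Finset.range (p-1), (2:ℝ)^((2-(α+β))*((q:ℝ)+1)) * ((1:ℝ)/2^p)^2)
            * (Kv*Kw/2) := by
        rw [Finset.sum_mul]
      rw [hs]
      refine le_trans (mul_le_mul_of_nonneg_right (sum_rpow_low (α+β) hγ0 hγ2 p)
        (by linarith)) (le_of_eq (by ring))
    have htail : ∑' q : ℕ,
        (if (q+(p-1))+2 ≤ p then (2:ℝ)^((2-(α+β))*((((q+(p-1)):ℕ):ℝ)+1)) * ((1:ℝ)/2^p)^2 * (Kv*Kw/2)
            else (2:ℝ)^(-((α+β)*((((q+(p-1)):ℕ):ℝ)+1))) * (Kv*Kw))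
        = (2:ℝ)^(-((α+β)*(p:ℝ))) * (1 - (2:ℝ)^(-(α+β)))⁻¹ * (Kv*Kw) := by
      have he : ∀ q : ℕ,
          (if (q+(p-1))+2 ≤ p then (2:ℝ)^((2-(α+β))*((((q+(p-1)):ℕ):ℝ)+1)) * ((1:ℝ)/2^p)^2 * (Kv*Kw/2)
              else (2:ℝ)^(-((α+β)*((((q+(p-1)):ℕ):ℝ)+1))) * (Kv*Kw))
          = (2:ℝ)^(-((α+β)*((q:ℝ)+(p:ℝ)))) * (Kv*Kw) := by
        intro q
        rw [if_neg (by omega)]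
        congr 2
        have : (((q+(p-1)):ℕ):ℝ) = (q:ℝ) + (p:ℝ) - 1 := by
          push_cast [Nat.cast_sub hp]
          ring
        rw [this]
        ring
      rw [tsum_congr he, tsum_rpow_shift (α+β) hγ0 (Kv*Kw) p]
    have htsum_u : ∑' q : ℕ,
        (if q+2 ≤ p then (2:ℝ)^((2-(α+β))*((q:ℝ)+1)) * ((1:ℝ)/2^p)^2 * (Kv*Kw/2)
            else (2:ℝ)^(-((α+β)*((q:ℝ)+1))) * (Kv*Kw))
        ≤ (2:ℝ)^(-((α+β)*(p:ℝ))) * (((2:ℝ)^(2-(α+β)) - 1)⁻¹ * (Kv*Kw/2))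
          + (2:ℝ)^(-((α+β)*(p:ℝ))) * (1 - (2:ℝ)^(-(α+β)))⁻¹ * (Kv*Kw) := by
      rw [← Summable.sum_add_tsum_nat_add (p-1) hus]
      linarith [hfin, le_of_eq htail]
    -- coefficient of the tsum part
    have hTsum_norm : Summable (fun q : ℕ =>
        ‖coeff (fun t => (block v (q+2) t) (block w (q+2) t)) p m‖) :=
      Summable.of_nonneg_of_le (fun q => norm_nonneg _) hu hus
    have hTcoeff : coeff (fun t => ∑' q : ℕ, (block v (q+2) t) (block w (q+2) t)) p m
        = ∑' q : ℕ, coeff (fun t => (block v (q+2) t) (block w (q+2) t)) p m := by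
      simp only [coeff_eq _ p m hm]
      rw [← Summable.tsum_add (hsum _) (hsum _), ← Summable.tsum_sub ((hsum _).add (hsum _)) (hsum _),
        ← Summable.tsum_sub (((hsum _).add (hsum _)).sub (hsum _)) (hsum _)]
    have hTn : ‖coeff (fun t => ∑' q : ℕ, (block v (q+2) t) (block w (q+2) t)) p m‖
        ≤ (2:ℝ)^(-((α+β)*(p:ℝ))) * (((2:ℝ)^(2-(α+β)) - 1)⁻¹ * (Kv*Kw/2))
          + (2:ℝ)^(-((α+β)*(p:ℝ))) * (1 - (2:ℝ)^(-(α+β)))⁻¹ * (Kv*Kw) := by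
      rw [hTcoeff]
      refine le_trans (norm_tsum_le_tsum_norm hTsum_norm) (le_trans ?_ htsum_u)
      exact Summable.tsum_le_tsum hu hTsum_norm hus
    -- coefficient of the generation-0 part
    have hAc : ‖coeff (fun t => ∑ mb ∈ Finset.range 2, ∑ nb ∈ Finset.range 2,
        (∫ s in (0:ℝ)..t, phi 0 mb s * chi 0 nb s) • ((coeff v 0 mb) (coeff w 0 nb))) p m‖
        ≤ 4 * (((1:ℝ)/2^p)^2 * (Kv*Kw)) := by
      have hAf_eq : (fun t => ∑ mb ∈ Finset.range 2, ∑ nb ∈ Finset.range 2,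
          (∫ s in (0:ℝ)..t, phi 0 mb s * chi 0 nb s) • ((coeff v 0 mb) (coeff w 0 nb)))
          = fun t => ∑ i ∈ Finset.range 2 ×ˢ Finset.range 2,
            (∫ s in (0:ℝ)..t, phi 0 i.1 s * chi 0 i.2 s)
              • ((coeff v 0 i.1) (coeff w 0 i.2)) :=
        funext fun t => (Finset.sum_product' _ _ _).symm
      rw [hAf_eq, coeff_sum_smul (Finset.range 2 ×ˢ Finset.range 2)
        (fun i t => ∫ s in (0:ℝ)..t, phi 0 i.1 s * chi 0 i.2 s)
        (fun i => (coeff v 0 i.1) (coeff w 0 i.2)) p m hm]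
      refine le_trans (norm_sum_le _ _) ?_
      have hb : ∀ i ∈ Finset.range 2 ×ˢ Finset.range 2,
          ‖coeff (fun t => ∫ s in (0:ℝ)..t, phi 0 i.1 s * chi 0 i.2 s) p m
            • ((coeff v 0 i.1) (coeff w 0 i.2))‖ ≤ ((1:ℝ)/2^p)^2 * (Kv*Kw) := by
        intro i hi
        rw [Finset.mem_product, Finset.mem_range, Finset.mem_range] at hi
        rw [norm_smul, Real.norm_eq_abs]
        apply mul_le_mul (coeff_h_le i.1 i.2 p m hp hm)
          (hterm i.1 i.2 (by omega) (by omega)) (norm_nonneg _) (by positivity)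
      refine le_trans (Finset.sum_le_sum hb) ?_
      rw [Finset.sum_const]
      have hcard : (Finset.range 2 ×ˢ Finset.range 2).card = 4 := by simp
      rw [hcard, nsmul_eq_mul]
      norm_num
    -- split the coefficient
    have hsplit : coeff (symPart v w) p m
        = coeff (fun t => ∑ mb ∈ Finset.range 2, ∑ nb ∈ Finset.range 2,
            (∫ s in (0:ℝ)..t, phi 0 mb s * chi 0 nb s) • ((coeff v 0 mb) (coeff w 0 nb))) p m
          + (1/2:ℝ) • coeff (fun t => ∑' q : ℕ, (block v (q+2) t) (block w (q+2) t)) p m := by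
      have hsym_eq : symPart v w = fun t =>
          (fun t => ∑ mb ∈ Finset.range 2, ∑ nb ∈ Finset.range 2,
            (∫ s in (0:ℝ)..t, phi 0 mb s * chi 0 nb s) • ((coeff v 0 mb) (coeff w 0 nb))) t
          + (1/2:ℝ) • (fun t => ∑' q : ℕ, (block v (q+2) t) (block w (q+2) t)) t := rfl
      rw [hsym_eq]
      exact coeff_add_smul
        (fun t => ∑ mb ∈ Finset.range 2, ∑ nb ∈ Finset.range 2,
          (∫ s in (0:ℝ)..t, phi 0 mb s * chi 0 nb s) • ((coeff v 0 mb) (coeff w 0 nb)))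
        (fun t => ∑' q : ℕ, (block v (q+2) t) (block w (q+2) t)) (1/2) p m hm
    -- assemble
    have hsq : ((1:ℝ)/2^p)^2 ≤ (2:ℝ)^(-((α+β)*(p:ℝ))) := by
      rw [one_div_two_pow_sq]
      apply Real.rpow_le_rpow_left_iff one_lt_two |>.mpr
      have hp0 : (0:ℝ) ≤ (p:ℝ) := Nat.cast_nonneg p
      nlinarith
    have hD0 : (0:ℝ) < (2:ℝ)^(-((α+β)*(p:ℝ))) := rpow_pos _
    have hP0 : (0:ℝ) ≤ (2:ℝ)^(-((α+β)*(p:ℝ))) * (Kv*Kw) := mul_nonneg hD0.le hKK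
    have hfinal : ‖coeff (symPart v w) p m‖
        ≤ (2:ℝ)^(-((α+β)*(p:ℝ)))
          * ((40 + 5*(1 - (2:ℝ)^(-(α+β)))⁻¹ + ((2:ℝ)^(2-(α+β)) - 1)⁻¹) * (Kv*Kw)) := by
      rw [hsplit]
      refine le_trans (norm_add_le _ _) ?_
      rw [norm_smul]
      have hhalf : ‖(1/2:ℝ)‖ = 1/2 := by rw [Real.norm_eq_abs]; norm_num
      rw [hhalf]
      have hA4 : ‖coeff (fun t => ∑ mb ∈ Finset.range 2, ∑ nb ∈ Finset.range 2,
          (∫ s in (0:ℝ)..t, phi 0 mb s * chi 0 nb s) • ((coeff v 0 mb) (coeff w 0 nb))) p m‖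
          ≤ 4 * ((2:ℝ)^(-((α+β)*(p:ℝ))) * (Kv*Kw)) := by
        refine le_trans hAc ?_
        apply mul_le_mul_of_nonneg_left (mul_le_mul_of_nonneg_right hsq hKK) (by norm_num)
      nlinarith [hTn, hA4, mul_nonneg hinv1.le hP0, mul_nonneg hinv2.le hP0, hP0]
    have hDD : (2:ℝ)^((α+β)*(p:ℝ)) * (2:ℝ)^(-((α+β)*(p:ℝ))) = 1 := by
      rw [← Real.rpow_add two_pos]
      simp
    calc (2:ℝ)^((α+β)*(p:ℝ)) * ‖coeff (symPart v w) p m‖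
        ≤ (2:ℝ)^((α+β)*(p:ℝ)) * ((2:ℝ)^(-((α+β)*(p:ℝ)))
          * ((40 + 5*(1 - (2:ℝ)^(-(α+β)))⁻¹ + ((2:ℝ)^(2-(α+β)) - 1)⁻¹) * (Kv*Kw))) :=
          mul_le_mul_of_nonneg_left hfinal (rpow_pos _).le
      _ = ((2:ℝ)^((α+β)*(p:ℝ)) * (2:ℝ)^(-((α+β)*(p:ℝ))))
          * ((40 + 5*(1 - (2:ℝ)^(-(α+β)))⁻¹ + ((2:ℝ)^(2-(α+β)) - 1)⁻¹) * (Kv*Kw)) := by ring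
      _ = (40 + 5*(1 - (2:ℝ)^(-(α+β)))⁻¹ + ((2:ℝ)^(2-(α+β)) - 1)⁻¹) * Kv * Kw := by
          rw [hDD]
          ring
  refine ⟨fun t _ => hsum t, ?_, ?_, ?_⟩
  · -- continuity
    have c1 : Continuous (fun t => ∑ mb ∈ Finset.range 2, ∑ nb ∈ Finset.range 2,
        (∫ s in (0:ℝ)..t, phi 0 mb s * chi 0 nb s) • ((coeff v 0 mb) (coeff w 0 nb))) :=
      continuous_finset_sum _ fun mb _ => continuous_finset_sum _ fun nb _ =>
        (intervalIntegral.continuous_primitive (integrable_phi_chi mb nb) 0).smul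
          continuous_const
    have c2 : Continuous (fun t => ∑' q : ℕ, (block v (q+2) t) (block w (q+2) t)) :=
      continuous_tsum
        (fun q => (continuous_block v (q+2)).clm_apply (continuous_block w (q+2)))
        (summable_rpow_mul (α+β) hγ0 (Kv*Kw/4)) (fun q t => g_norm hv hw q t)
    have : Continuous (symPart v w) := by
      unfold symPart
      exact c1.add ((continuous_const (y := (1/2:ℝ))).smul c2)
    exact this.continuousOn
  · -- f 0 component
    rw [hS0, norm_zero, mul_zero]
    exact hCKK
  · -- coefficients
    intro p m hmp
    by_cases hm : m = 0
    · subst hm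
      rcases Nat.eq_zero_or_pos p with hp | hp
      · subst hp
        have hc00 : coeff (symPart v w) 0 0 = symPart v w 1 - symPart v w 0 := by
          simp [coeff]
        have hb : ‖coeff (symPart v w) 0 0‖
            ≤ 2 * ((8 + (1 - (2:ℝ)^(-(α+β)))⁻¹) * (Kv*Kw)) := by
          rw [hc00]
          have h1 := hSup 1 (by norm_num)
          have h0 := hSup 0 (by norm_num)
          have := norm_sub_le (symPart v w 1) (symPart v w 0)
          linarith
        have e1 : (2:ℝ)^((α+β)*((0:ℕ):ℝ)) = 1 := by simp
        rw [e1, one_mul]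
        have he : 2 * ((8 + (1 - (2:ℝ)^(-(α+β)))⁻¹) * (Kv*Kw))
            = 16*(Kv*Kw) + 2*((1 - (2:ℝ)^(-(α+β)))⁻¹*(Kv*Kw)) := by ring
        have hC : (40 + 5*(1 - (2:ℝ)^(-(α+β)))⁻¹ + ((2:ℝ)^(2-(α+β)) - 1)⁻¹) * Kv * Kw
            = 40*(Kv*Kw) + 5*((1 - (2:ℝ)^(-(α+β)))⁻¹*(Kv*Kw))
              + ((2:ℝ)^(2-(α+β)) - 1)⁻¹*(Kv*Kw) := by ring
        rw [hC]
        linarith [mul_nonneg hinv1.le hKK, mul_nonneg hinv2.le hKK, hKK, hb, le_of_eq he]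
      · have hc : coeff (symPart v w) p 0 = 0 := by
          simp [coeff, Nat.pos_iff_ne_zero.mp hp]
        rw [hc, norm_zero, mul_zero]
        exact hCKK
    · rcases Nat.eq_zero_or_pos p with hp | hp
      · subst hp
        have hm1 : m = 1 := by
          have : m ≤ 1 := by simpa using hmp
          omega
        subst hm1
        have hpt0 : pt0 0 1 = 0 := by norm_num [pt0]
        have hpt1 : pt1 0 1 = 1/2 := by norm_num [pt1]
        have hpt2 : pt2 0 1 = 1 := by norm_num [pt2]
        have hb := norm_coeff_le_of_bound (symPart v w) 0 1 one_ne_zero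
          ((8 + (1 - (2:ℝ)^(-(α+β)))⁻¹) * (Kv*Kw))
          (by rw [hpt1]; exact hSup _ (by norm_num))
          (by rw [hpt0]; exact hSup _ (by norm_num))
          (by rw [hpt2]; exact hSup _ (by norm_num))
        have e1 : (2:ℝ)^((α+β)*((0:ℕ):ℝ)) = 1 := by simp
        rw [e1, one_mul]
        have he : 4 * ((8 + (1 - (2:ℝ)^(-(α+β)))⁻¹) * (Kv*Kw))
            = 32*(Kv*Kw) + 4*((1 - (2:ℝ)^(-(α+β)))⁻¹*(Kv*Kw)) := by ring
        have hC : (40 + 5*(1 - (2:ℝ)^(-(α+β)))⁻¹ + ((2:ℝ)^(2-(α+β)) - 1)⁻¹) * Kv * Kw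
            = 40*(Kv*Kw) + 5*((1 - (2:ℝ)^(-(α+β)))⁻¹*(Kv*Kw))
              + ((2:ℝ)^(2-(α+β)) - 1)⁻¹*(Kv*Kw) := by ring
        rw [hC]
        linarith [mul_nonneg hinv1.le hKK, mul_nonneg hinv2.le hKK, hKK, hb, le_of_eq he]
      · exact hmain p m hp hm
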